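/- Let p, q, r, P, Q, R : ℝ → ℝ be differentiable functions, and let D ⊆ ℝ³ be an open set such that P(a) ≠ 0, Q(b) ≠ 0 and R(c) ≠ 0 for all (a, b, c) ∈ D. Define on D the functions f(a,b) = (p(a) − q(b))/(P(a)Q(b)), g(a,c) = (r(c) − p(a))/(P(a)R(c)), h(b,c) = (q(b) − r(c))/(Q(b)R(c)). Then at every point of D the following three identities hold (subscripts denoting partial derivatives in the indicated variables): g h f_{ab} = g h_b f_a + g_a h f_b − g_a h_b f; f h g_{ac} = f h_c g_a + f_a h g_c − f_a h_c g; f g h_{bc} = f g_c h_b + f_b g h_c − f_b g_c h. -/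

import Mathlib

lemma Ld1 (u v U V : ℝ → ℝ) (hu : Differentiable ℝ u) (hU : Differentiable ℝ U)
    (x y : ℝ) (hUx : U x ≠ 0) (hVy : V y ≠ 0) :
    deriv (fun x' => (u x' - v y) / (U x' * V y)) x
      = (deriv u x * U x - (u x - v y) * deriv U x) / (U x ^ 2 * V y) := by
  have h1 : HasDerivAt (fun x' => u x' - v y) (deriv u x) x := (hu x).hasDerivAt.sub_const _
  have h2 : HasDerivAt (fun x' => U x' * V y) (deriv U x * V y) x := (hU x).hasDerivAt.mul_const _
  rw [(h1.fun_div h2 (mul_ne_zero hUx hVy)).deriv]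
  field_simp

lemma Ld2 (u v U V : ℝ → ℝ) (hv : Differentiable ℝ v) (hV : Differentiable ℝ V)
    (x y : ℝ) (hUx : U x ≠ 0) (hVy : V y ≠ 0) :
    deriv (fun y' => (u x - v y') / (U x * V y')) y
      = (-(deriv v y) * V y - (u x - v y) * deriv V y) / (U x * V y ^ 2) := by
  have h1 : HasDerivAt (fun y' => u x - v y') (-(deriv v y)) y := (hv y).hasDerivAt.const_sub _
  have h2 : HasDerivAt (fun y' => U x * V y') (U x * deriv V y) y := (hV y).hasDerivAt.const_mul _
  rw [(h1.fun_div h2 (mul_ne_zero hUx hVy)).deriv]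
  field_simp

lemma Ld3 (u v U V : ℝ → ℝ) (hu : Differentiable ℝ u) (hv : Differentiable ℝ v)
    (hU : Differentiable ℝ U) (hV : Differentiable ℝ V)
    (x y : ℝ) (hUx : U x ≠ 0) (hVy : V y ≠ 0) :
    deriv (fun y' => deriv (fun x' => (u x' - v y') / (U x' * V y')) x) y
      = (deriv v y * deriv U x * V y
          - (deriv u x * U x - (u x - v y) * deriv U x) * deriv V y) / (U x ^ 2 * V y ^ 2) := by
  have hev : (fun y' => deriv (fun x' => (u x' - v y') / (U x' * V y')) x)
      =ᶠ[nhds y] fun y' => (deriv u x * U x - (u x - v y') * deriv U x) / (U x ^ 2 * V y') := by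
    filter_upwards [(hV.continuous.continuousAt (x := y)).eventually_ne hVy] with y' hy'
    exact Ld1 u v U V hu hU x y' hUx hy'
  rw [hev.deriv_eq]
  have hN : HasDerivAt (fun y' => deriv u x * U x - (u x - v y') * deriv U x)
      (deriv v y * deriv U x) y := by
    have h0 := (((hv y).hasDerivAt.const_sub (u x)).mul_const (deriv U x)).const_sub
        (deriv u x * U x)
    exact h0.congr_deriv (by ring)
  have hD : HasDerivAt (fun y' => U x ^ 2 * V y') (U x ^ 2 * deriv V y) y :=
    (hV y).hasDerivAt.const_mul _
  rw [(hN.fun_div hD (mul_ne_zero (pow_ne_zero 2 hUx) hVy)).deriv]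
  field_simp

set_option maxHeartbeats 1600000 in
/-- The separable ansatz `f = (p−q)/(PQ)`, `g = (r−p)/(PR)`, `h = (q−r)/(QR)` satisfies
identically the first three integrability conditions (in cleared form)
`g h f_{ab} = g h_b f_a + g_a h f_b − g_a h_b f`,
`f h g_{ac} = f h_c g_a + f_a h g_c − f_a h_c g`,
`f g h_{bc} = f g_c h_b + f_b g h_c − f_b g_c h`. -/
theorem separable_ansatz_satisfies_integrability_conditions
    (p q r P Q R : ℝ → ℝ)
    (hp : Differentiable ℝ p) (hq : Differentiable ℝ q) (hr : Differentiable ℝ r)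
    (hP : Differentiable ℝ P) (hQ : Differentiable ℝ Q) (hR : Differentiable ℝ R)
    (D : Set (ℝ × ℝ × ℝ)) (hD : IsOpen D)
    (hPQR : ∀ x ∈ D, P x.1 ≠ 0 ∧ Q x.2.1 ≠ 0 ∧ R x.2.2 ≠ 0)
    (f g h : ℝ → ℝ → ℝ)
    (hf : ∀ a b, f a b = (p a - q b) / (P a * Q b))
    (hg : ∀ a c, g a c = (r c - p a) / (P a * R c))
    (hh : ∀ b c, h b c = (q b - r c) / (Q b * R c)) :
    ∀ a b c : ℝ, (a, b, c) ∈ D →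
      (g a c * h b c * deriv (fun b' => deriv (fun a' => f a' b') a) b
        = g a c * deriv (fun b' => h b' c) b * deriv (fun a' => f a' b) a
          + deriv (fun a' => g a' c) a * h b c * deriv (fun b' => f a b') b
          - deriv (fun a' => g a' c) a * deriv (fun b' => h b' c) b * f a b) ∧
      (f a b * h b c * deriv (fun c' => deriv (fun a' => g a' c') a) c
        = f a b * deriv (fun c' => h b c') c * deriv (fun a' => g a' c) a
          + deriv (fun a' => f a' b) a * h b c * deriv (fun c' => g a c') c
          - deriv (fun a' => f a' b) a * deriv (fun c' => h b c') c * g a c) ∧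
      (f a b * g a c * deriv (fun c' => deriv (fun b' => h b' c') b) c
        = f a b * deriv (fun c' => g a c') c * deriv (fun b' => h b' c) b
          + deriv (fun b' => f a b') b * g a c * deriv (fun c' => h b c') c
          - deriv (fun b' => f a b') b * deriv (fun c' => g a c') c * h b c) := by
  intro a b c hm
  obtain ⟨hPa, hQb, hRc⟩ := hPQR (a, b, c) hm
  have hg' : ∀ a' c', g a' c' = -((p a' - r c') / (P a' * R c')) := by
    intro a' c'
    rw [hg, ← neg_sub (p a'), neg_div]
  have hfa : deriv (fun a' => f a' b) a
      = (deriv p a * P a - (p a - q b) * deriv P a) / (P a ^ 2 * Q b) := by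
    simp only [hf]; exact Ld1 p q P Q hp hP a b hPa hQb
  have hfb : deriv (fun b' => f a b') b
      = (-(deriv q b) * Q b - (p a - q b) * deriv Q b) / (P a * Q b ^ 2) := by
    simp only [hf]; exact Ld2 p q P Q hq hQ a b hPa hQb
  have hfab : deriv (fun b' => deriv (fun a' => f a' b') a) b
      = (deriv q b * deriv P a * Q b
          - (deriv p a * P a - (p a - q b) * deriv P a) * deriv Q b) / (P a ^ 2 * Q b ^ 2) := by
    simp only [hf]; exact Ld3 p q P Q hp hq hP hQ a b hPa hQb
  have hhb : deriv (fun b' => h b' c) b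
      = (deriv q b * Q b - (q b - r c) * deriv Q b) / (Q b ^ 2 * R c) := by
    simp only [hh]; exact Ld1 q r Q R hq hQ b c hQb hRc
  have hhc : deriv (fun c' => h b c') c
      = (-(deriv r c) * R c - (q b - r c) * deriv R c) / (Q b * R c ^ 2) := by
    simp only [hh]; exact Ld2 q r Q R hr hR b c hQb hRc
  have hhbc : deriv (fun c' => deriv (fun b' => h b' c') b) c
      = (deriv r c * deriv Q b * R c
          - (deriv q b * Q b - (q b - r c) * deriv Q b) * deriv R c) / (Q b ^ 2 * R c ^ 2) := by
    simp only [hh]; exact Ld3 q r Q R hq hr hQ hR b c hQb hRc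
  have hga : deriv (fun a' => g a' c) a
      = -((deriv p a * P a - (p a - r c) * deriv P a) / (P a ^ 2 * R c)) := by
    simp only [hg', deriv.fun_neg]
    rw [Ld1 p r P R hp hP a c hPa hRc]
  have hgc : deriv (fun c' => g a c') c
      = -((-(deriv r c) * R c - (p a - r c) * deriv R c) / (P a * R c ^ 2)) := by
    simp only [hg', deriv.fun_neg]
    rw [Ld2 p r P R hr hR a c hPa hRc]
  have hgac : deriv (fun c' => deriv (fun a' => g a' c') a) c
      = -((deriv r c * deriv P a * R c
          - (deriv p a * P a - (p a - r c) * deriv P a) * deriv R c) / (P a ^ 2 * R c ^ 2)) := by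
    simp only [hg', deriv.fun_neg]
    rw [Ld3 p r P R hp hr hP hR a c hPa hRc]
  rw [hf, hg, hh]
  rw [hfa, hfb, hfab, hhb, hhc, hhbc, hga, hgc, hgac]
  refine ⟨?_, ?_, ?_⟩ <;> (field_simp; ring)
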